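/- Let k be a field and A a separable (finite-dimensional) k-algebra, i.e., A is projective as an A ⊗_k A^op-module, with multiplication map m : A ⊗ A → A admitting an A-A-bimodule section Δ. Then for any A-module M, the action map A ⊗_k M → M admits an A-module section, namely (Δ ⊗ id_M) followed by the evaluation; consequently every A-module is a direct summand of a free-type module A ⊗_k M and is projective, so A is a semisimple algebra. -/

import Mathlib

open scoped TensorProduct

/-- The action map `A ⊗[k] M →ₗ[k] M`, `a ⊗ v ↦ a • v`, of an `A`-module `M`. -/
noncomputable def actionMap (k A M : Type) [Field k] [Ring A] [Algebra k A]
    [AddCommGroup M] [Module k M] [Module A M] [IsScalarTower k A M] :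
    A ⊗[k] M →ₗ[k] M :=
  TensorProduct.lift (LinearMap.mk₂ k (fun a v => a • v)
    (fun a b v => add_smul a b v)
    (fun c a v => smul_assoc c a v)
    (fun a v w => smul_add a v w)
    (fun c a v => by rw [smul_comm]))

/-- If `A` is a separable finite-dimensional `k`-algebra, i.e. the multiplication
`m : A ⊗ A → A` admits an `A`-`A`-bimodule section `Δ`, then for any `A`-module `M` the action
map `A ⊗[k] M → M` admits an `A`-linear section (namely `(Δ ⊗ id_M)` followed by evaluation);
consequently every `A`-module is projective, so `A` is a semisimple algebra. -/
theorem stmt_19 (k A : Type) [Field k] [Ring A] [Algebra k A] [FiniteDimensional k A]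
    (Δ : A →ₗ[k] A ⊗[k] A)
    (hsec : ∀ x : A, (LinearMap.mul' k A) (Δ x) = x)
    (hbimod : ∀ a b x : A, Δ (a * x * b) =
      TensorProduct.map (LinearMap.mulLeft k a) (LinearMap.mulRight k b) (Δ x)) :
    (∀ (M : Type) [AddCommGroup M] [Module k M] [Module A M] [IsScalarTower k A M],
      ∃ s : M →ₗ[k] A ⊗[k] M,
        (∀ (a : A) (v : M),
          s (a • v) = TensorProduct.map (LinearMap.mulLeft k a) LinearMap.id (s v)) ∧
        ∀ v : M, actionMap k A M (s v) = v) ∧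
    (∀ (M : Type) [AddCommGroup M] [Module A M], Module.Projective A M) ∧
    IsSemisimpleRing A := by
  have main : ∀ (M : Type) [AddCommGroup M] [Module k M] [Module A M] [IsScalarTower k A M],
      ∃ s : M →ₗ[k] A ⊗[k] M,
        (∀ (a : A) (v : M),
          s (a • v) = TensorProduct.map (LinearMap.mulLeft k a) LinearMap.id (s v)) ∧
        ∀ v : M, actionMap k A M (s v) = v := by
    intro M _ _ _ _
    let S : A ⊗[k] A → M →ₗ[k] A ⊗[k] M := fun t =>
      (LinearMap.lTensor A (actionMap k A M)) ∘ₗ (TensorProduct.assoc k A A M).toLinearMap ∘ₗ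
        (TensorProduct.mk k (A ⊗[k] A) M t)
    have Stmul : ∀ (x y : A) (v : M), S (x ⊗ₜ y) v = x ⊗ₜ (y • v) := by
      intro x y v
      simp [S, TensorProduct.assoc_tmul, actionMap]
    have Sadd : ∀ (t₁ t₂ : A ⊗[k] A) (v : M), S (t₁ + t₂) v = S t₁ v + S t₂ v := by
      intro t₁ t₂ v
      simp [S, TensorProduct.add_tmul]
    have Szero : ∀ v : M, S 0 v = 0 := by
      intro v; simp [S, TensorProduct.zero_tmul]
    have L1 : ∀ (a : A) (t : A ⊗[k] A) (v : M),
        S (TensorProduct.map LinearMap.id (LinearMap.mulRight k a) t) v = S t (a • v) := by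
      intro a t v
      induction t using TensorProduct.induction_on with
      | zero => simp [Szero]
      | tmul x y => simp [Stmul, mul_smul]
      | add t₁ t₂ h₁ h₂ => simp [map_add, Sadd, h₁, h₂]
    have L2 : ∀ (a : A) (t : A ⊗[k] A) (v : M),
        S (TensorProduct.map (LinearMap.mulLeft k a) LinearMap.id t) v =
          TensorProduct.map (LinearMap.mulLeft k a) LinearMap.id (S t v) := by
      intro a t v
      induction t using TensorProduct.induction_on with
      | zero => simp [Szero]
      | tmul x y => simp [Stmul]
      | add t₁ t₂ h₁ h₂ => simp [map_add, Sadd, h₁, h₂]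
    have L3 : ∀ (t : A ⊗[k] A) (v : M),
        actionMap k A M (S t v) = (LinearMap.mul' k A t) • v := by
      intro t v
      induction t using TensorProduct.induction_on with
      | zero => simp [Szero]
      | tmul x y => simp [Stmul, actionMap, mul_smul]
      | add t₁ t₂ h₁ h₂ => simp [map_add, Sadd, h₁, h₂, add_smul]
    refine ⟨S (Δ 1), fun a v => ?_, fun v => ?_⟩
    · have h1 : TensorProduct.map LinearMap.id (LinearMap.mulRight k a) (Δ 1) = Δ a := by
        have h := hbimod 1 a 1
        simpa [LinearMap.mulLeft_one] using h.symm
      have h2 : TensorProduct.map (LinearMap.mulLeft k a) LinearMap.id (Δ 1) = Δ a := by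
        have h := hbimod a 1 1
        simpa [LinearMap.mulRight_one] using h.symm
      calc S (Δ 1) (a • v)
          = S (TensorProduct.map LinearMap.id (LinearMap.mulRight k a) (Δ 1)) v :=
            (L1 a (Δ 1) v).symm
        _ = S (TensorProduct.map (LinearMap.mulLeft k a) LinearMap.id (Δ 1)) v := by
            rw [h1, h2]
        _ = TensorProduct.map (LinearMap.mulLeft k a) LinearMap.id (S (Δ 1) v) := L2 a (Δ 1) v
    · rw [L3, hsec, one_smul]
  have proj : ∀ (M : Type) [AddCommGroup M] [Module A M], Module.Projective A M := by
    intro M _ _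
    letI : Module k M := Module.compHom M (algebraMap k A)
    haveI : IsScalarTower k A M := IsScalarTower.of_algebraMap_smul fun c m => rfl
    obtain ⟨s, hs1, hs2⟩ := main M
    have smulLemma : ∀ (a : A) (t : A ⊗[k] M),
        TensorProduct.map (LinearMap.mulLeft k a) LinearMap.id t = a • t := by
      intro a t
      induction t using TensorProduct.induction_on with
      | zero => simp
      | tmul x m => simp [TensorProduct.smul_tmul', smul_eq_mul]
      | add t₁ t₂ h₁ h₂ => simp [map_add, h₁, h₂]
    have actLemma : ∀ (a : A) (t : A ⊗[k] M),
        actionMap k A M (a • t) = a • actionMap k A M t := by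
      intro a t
      induction t using TensorProduct.induction_on with
      | zero => simp
      | tmul x m =>
          rw [TensorProduct.smul_tmul']
          simp [actionMap, smul_eq_mul, mul_smul]
      | add t₁ t₂ h₁ h₂ => simp [smul_add, h₁, h₂]
    let sA : M →ₗ[A] A ⊗[k] M :=
      { toFun := s
        map_add' := s.map_add
        map_smul' := fun a v => by simp only [RingHom.id_apply]; rw [hs1, smulLemma] }
    let actA : A ⊗[k] M →ₗ[A] M :=
      { toFun := actionMap k A M
        map_add' := (actionMap k A M).map_add
        map_smul' := fun a t => by simp only [RingHom.id_apply]; exact actLemma a t }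
    exact Module.Projective.of_split sA actA (LinearMap.ext fun v => hs2 v)
  refine ⟨main, proj, ?_⟩
  refine (isSemisimpleModule_iff A A).mpr ⟨?_⟩
  intro N
  haveI := proj (A ⧸ N)
  obtain ⟨h, hh⟩ := Module.projective_lifting_property N.mkQ LinearMap.id N.mkQ_surjective
  have hmk : ∀ y : A ⧸ N, N.mkQ (h y) = y := fun y => LinearMap.congr_fun hh y
  refine ⟨LinearMap.range h, ?_, ?_⟩
  · rw [disjoint_iff]
    rw [Submodule.eq_bot_iff]
    rintro x ⟨hxN, y, rfl⟩
    have hy : y = 0 := by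
      have h0 : N.mkQ (h y) = 0 := by
        simpa using (Submodule.Quotient.mk_eq_zero N).mpr hxN
      rwa [hmk y] at h0
    simp [hy]
  · rw [codisjoint_iff, eq_top_iff]
    intro x _
    have hx : x - h (N.mkQ x) ∈ N := by
      rw [← Submodule.Quotient.mk_eq_zero N]
      have : N.mkQ (x - h (N.mkQ x)) = 0 := by
        rw [map_sub, hmk]; simp
      simpa using this
    exact Submodule.mem_sup.mpr ⟨x - h (N.mkQ x), hx, h (N.mkQ x),
      ⟨N.mkQ x, rfl⟩, by abel⟩
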